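/- Let q be a positive real number with q ≠ 1, let c ≥ 1 be an integer and let l ≥ 2 be an integer. Then Σ_{ν ⊢ l} ((−1)^{ℓ(ν)}/z_ν) · Σ_{d} c·d·(1−q^{c−1})(1−q^{d−1})/(1−q^{c+d−1}) = c·( (1−q^{c−1})(1−q^{l−2})/(1−q^{c+l−2}) − (1−q^{c−1})(1−q^{l−1})/(1−q^{c+l−1}) ), where the outer sum runs over all integer partitions ν of l and the inner sum runs over the parts d of ν counted with multiplicity. -/

import Mathlib

open Finset

def zM (s : Multiset ℕ) : ℕ :=
  ∏ j ∈ s.toFinset, j ^ (s.count j) * (s.count j).factorial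

lemma zM_ne_zero (s : Multiset ℕ) (h : 0 ∉ s) : zM s ≠ 0 := by
  unfold zM
  rw [Finset.prod_ne_zero_iff]
  intro j hj
  have hj0 : j ≠ 0 := fun e => h (e ▸ Multiset.mem_toFinset.1 hj)
  positivity

lemma zM_cons (d : ℕ) (s : Multiset ℕ) :
    zM (d ::ₘ s) = (d * (s.count d + 1)) * zM s := by
  unfold zM
  rw [Multiset.toFinset_cons]
  by_cases hds : d ∈ s.toFinset
  · rw [Finset.insert_eq_self.2 hds]
    rw [← Finset.mul_prod_erase _ _ hds, ← Finset.mul_prod_erase _ _ hds]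
    have h1 : ∀ j ∈ s.toFinset.erase d,
        j ^ ((d ::ₘ s).count j) * ((d ::ₘ s).count j).factorial
          = j ^ (s.count j) * (s.count j).factorial := by
      intro j hj
      rw [Multiset.count_cons_of_ne (Finset.ne_of_mem_erase hj)]
    rw [Finset.prod_congr rfl h1, Multiset.count_cons_self, Nat.factorial_succ, pow_succ]
    ring
  · rw [Finset.prod_insert hds]
    have hc : s.count d = 0 := by
      simpa [Multiset.count_eq_zero] using fun h => hds (Multiset.mem_toFinset.2 h)
    have h1 : ∀ j ∈ s.toFinset,
        j ^ ((d ::ₘ s).count j) * ((d ::ₘ s).count j).factorial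
          = j ^ (s.count j) * (s.count j).factorial := by
      intro j hj
      have : j ≠ d := fun e => hds (e ▸ hj)
      rw [Multiset.count_cons_of_ne this]
    rw [Finset.prod_congr rfl h1, Multiset.count_cons_self, hc]
    simp

lemma zM_parts_ne_zero {n : ℕ} (ν : Nat.Partition n) : (zM ν.parts : ℝ) ≠ 0 := by
  have : zM ν.parts ≠ 0 := zM_ne_zero _ (fun h => lt_irrefl 0 (ν.parts_pos h))
  exact_mod_cast this

lemma sum_partition_insert (n d : ℕ) (hd : 0 < d) (hdn : d ≤ n) (f : Multiset ℕ → ℝ)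
    (hf : ∀ s : Multiset ℕ, d ∉ s → f s = 0) :
    ∑ ν : Nat.Partition n, f ν.parts
      = ∑ μ : Nat.Partition (n - d), f (d ::ₘ μ.parts) := by
  rw [← Finset.sum_filter_of_ne (p := fun ν : Nat.Partition n => d ∈ ν.parts)
    (fun x _ hx => by by_contra h; exact hx (hf _ h))]
  refine Finset.sum_bij' (t := Finset.univ)
    (fun ν hν => ⟨ν.parts.erase d, fun hi => ν.parts_pos (Multiset.mem_of_mem_erase hi), ?_⟩)
    (fun μ _ => ⟨d ::ₘ μ.parts,
      fun hi => by rcases Multiset.mem_cons.1 hi with rfl | h; exacts [hd, μ.parts_pos h], ?_⟩)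
    ?_ ?_ ?_ ?_ ?_
  · have hmem : d ∈ ν.parts := by simpa using hν
    have := Multiset.cons_erase hmem
    have hs : d + (ν.parts.erase d).sum = n := by
      rw [← Multiset.sum_cons, this, ν.parts_sum]
    omega
  · rw [Multiset.sum_cons, μ.parts_sum]
    omega
  · intro a ha; exact Finset.mem_univ _
  · intro a ha
    have hmem : d ∈ (d ::ₘ a.parts) := Multiset.mem_cons_self _ _
    simp [hmem]
  · intro a ha
    have hmem : d ∈ a.parts := by simpa using ha
    exact Nat.Partition.ext (Multiset.cons_erase hmem)
  · intro a ha
    exact Nat.Partition.ext (Multiset.erase_cons_head _ _)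
  · intro a ha
    have hmem : d ∈ a.parts := by simpa using ha
    rw [Multiset.cons_erase hmem]

noncomputable def B (m : ℕ) : ℝ :=
  ∑ μ : Nat.Partition m, (-1 : ℝ) ^ (Multiset.card μ.parts) / (zM μ.parts : ℝ)

lemma B_zero : B 0 = 1 := by
  rw [B, Fintype.sum_unique]
  simp [zM]

lemma B_one : B 1 = -1 := by
  rw [B, Fintype.sum_unique]
  have : (default : Nat.Partition 1).parts = {1} := Nat.Partition.partition_one_parts _
  rw [this]
  norm_num [zM]

lemma C_eq (n d : ℕ) (hd : 0 < d) (hdn : d ≤ n) :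
    ∑ ν : Nat.Partition n,
        (-1 : ℝ) ^ (Multiset.card ν.parts) * (ν.parts.count d : ℝ) / (zM ν.parts : ℝ)
      = - B (n - d) / d := by
  rw [sum_partition_insert n d hd hdn
      (fun s => (-1 : ℝ) ^ (Multiset.card s) * (s.count d : ℝ) / (zM s : ℝ))
      (by intro s hs; simp [Multiset.count_eq_zero_of_notMem hs])]
  have key : ∀ μ : Nat.Partition (n - d),
      (-1 : ℝ) ^ (Multiset.card (d ::ₘ μ.parts)) * ((d ::ₘ μ.parts).count d : ℝ)
          / (zM (d ::ₘ μ.parts) : ℝ)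
        = -(((-1 : ℝ) ^ (Multiset.card μ.parts) / (zM μ.parts : ℝ)) / d) := by
    intro μ
    have hz : (zM μ.parts : ℝ) ≠ 0 := zM_parts_ne_zero μ
    have hd' : (d : ℝ) ≠ 0 := Nat.cast_ne_zero.2 hd.ne'
    rw [zM_cons, Multiset.count_cons_self, Multiset.card_cons, pow_succ]
    push_cast
    have hcnt : ((μ.parts.count d : ℝ) + 1) ≠ 0 := by positivity
    field_simp
  rw [Finset.sum_congr rfl (fun μ _ => key μ)]
  unfold B
  rw [neg_div, Finset.sum_div, ← Finset.sum_neg_distrib]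


lemma parts_subset_Icc {n : ℕ} (ν : Nat.Partition n) : ν.parts.toFinset ⊆ Finset.Icc 1 n := by
  intro m hm
  have hm' : m ∈ ν.parts := Multiset.mem_toFinset.1 hm
  exact Finset.mem_Icc.2 ⟨ν.parts_pos hm',
    (Multiset.le_sum_of_mem hm').trans_eq ν.parts_sum⟩

lemma map_sum_eq {n : ℕ} (ν : Nat.Partition n) (h : ℕ → ℝ) :
    (ν.parts.map h).sum = ∑ d ∈ Finset.Icc 1 n, (ν.parts.count d : ℝ) * h d := by
  rw [Finset.sum_multiset_map_count,
    Finset.sum_subset (parts_subset_Icc ν) (fun d _ hd => by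
      rw [Multiset.count_eq_zero_of_notMem (fun h' => hd (Multiset.mem_toFinset.2 h'))]
      simp)]
  exact Finset.sum_congr rfl (fun d _ => nsmul_eq_mul _ _)

lemma master (n : ℕ) (h : ℕ → ℝ) :
    ∑ ν : Nat.Partition n,
        (-1 : ℝ) ^ (Multiset.card ν.parts) / (zM ν.parts : ℝ) * (ν.parts.map h).sum
      = ∑ d ∈ Finset.Icc 1 n, h d * (- B (n - d) / d) := by
  have step : ∀ ν : Nat.Partition n,
      (-1 : ℝ) ^ (Multiset.card ν.parts) / (zM ν.parts : ℝ) * (ν.parts.map h).sum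
        = ∑ d ∈ Finset.Icc 1 n,
            (-1 : ℝ) ^ (Multiset.card ν.parts) * (ν.parts.count d : ℝ) / (zM ν.parts : ℝ)
              * h d := by
    intro ν
    rw [map_sum_eq, Finset.mul_sum]
    exact Finset.sum_congr rfl (fun d _ => by ring)
  rw [Finset.sum_congr rfl (fun ν _ => step ν), Finset.sum_comm]
  refine Finset.sum_congr rfl (fun d hd => ?_)
  obtain ⟨hd1, hdn⟩ := Finset.mem_Icc.1 hd
  rw [← Finset.sum_mul, C_eq n d hd1 hdn, mul_comm]

lemma B_recursion (n : ℕ) (hn : 1 ≤ n) :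
    (n : ℝ) * B n = - ∑ j ∈ Finset.range n, B j := by
  have h1 := master n (fun d => (d : ℝ))
  have e : ∀ ν : Nat.Partition n,
      (Multiset.map (fun d : ℕ => (d : ℝ)) ν.parts).sum = (n : ℝ) := by
    intro ν
    conv_rhs => rw [← ν.parts_sum]
    simp
  have L : ∑ ν : Nat.Partition n,
      (-1 : ℝ) ^ (Multiset.card ν.parts) / (zM ν.parts : ℝ)
        * (Multiset.map (fun d : ℕ => (d : ℝ)) ν.parts).sum = (n : ℝ) * B n := by
    rw [B, Finset.mul_sum]
    refine Finset.sum_congr rfl (fun ν _ => ?_)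
    rw [e ν]
    ring
  have e2 : ∀ d ∈ Finset.Icc 1 n, (d : ℝ) * (- B (n - d) / d) = - B (n - d) := by
    intro d hd
    obtain ⟨hd1, -⟩ := Finset.mem_Icc.1 hd
    have : (d : ℝ) ≠ 0 := Nat.cast_ne_zero.2 (by omega)
    field_simp
  have R : ∑ d ∈ Finset.Icc 1 n, (d : ℝ) * (- B (n - d) / d)
      = - ∑ j ∈ Finset.range n, B j := by
    rw [Finset.sum_congr rfl e2, ← Finset.sum_neg_distrib]
    refine Finset.sum_nbij' (fun d => n - d) (fun j => n - j) ?_ ?_ ?_ ?_ ?_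
    · intro d hd; simp only [Finset.mem_Icc, Finset.mem_range] at *; omega
    · intro j hj; simp only [Finset.mem_Icc, Finset.mem_range] at *; omega
    · intro d hd; simp only [Finset.mem_Icc] at hd; omega
    · intro j hj; simp only [Finset.mem_range] at hj; omega
    · intro d hd; rfl
  rw [← L, h1, R]

lemma sumB (n : ℕ) (hn : 2 ≤ n) : ∑ j ∈ Finset.range n, B j = 0 := by
  induction n with
  | zero => omega
  | succ m ih =>
    rcases Nat.lt_or_ge m 2 with hm | hm
    · have : m = 1 := by omega
      subst this
      rw [Finset.sum_range_succ, Finset.sum_range_one, B_zero, B_one]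
      ring
    · have hs := ih hm
      have hr := B_recursion m (by omega)
      rw [hs, neg_zero] at hr
      have hm0 : (m : ℝ) ≠ 0 := Nat.cast_ne_zero.2 (by omega)
      have hBm : B m = 0 := by
        rcases mul_eq_zero.1 hr with h' | h'
        · exact absurd h' hm0
        · exact h'
      rw [Finset.sum_range_succ, hs, hBm, add_zero]

lemma B_eq_zero (n : ℕ) (hn : 2 ≤ n) : B n = 0 := by
  have hr := B_recursion n (by omega)
  rw [sumB n hn, neg_zero] at hr
  have hn0 : (n : ℝ) ≠ 0 := Nat.cast_ne_zero.2 (by omega)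
  rcases mul_eq_zero.1 hr with h' | h'
  · exact absurd h' hn0
  · exact h'

lemma one_sub_pow_ne (q : ℝ) (hq0 : 0 < q) (hq1 : q ≠ 1) (m : ℕ) (hm : 1 ≤ m) :
    1 - q ^ m ≠ 0 := by
  rcases lt_or_gt_of_ne hq1 with h | h
  · have : q ^ m < 1 := pow_lt_one₀ hq0.le h (by omega)
    linarith
  · have : 1 < q ^ m := one_lt_pow₀ h (by omega)
    linarith

/-- `z_ν = ∏_j j^{m_j(ν)} · m_j(ν)!` where `m_j(ν)` is the number of parts of `ν`
equal to `j`. -/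
def zPartition {n : ℕ} (P : Nat.Partition n) : ℕ :=
  ∏ j ∈ P.parts.toFinset, j ^ (P.parts.count j) * (P.parts.count j).factorial

theorem partition_sum_simplification
    (q : ℝ) (hq0 : 0 < q) (hq1 : q ≠ 1) (c : ℕ) (hc : 1 ≤ c) (l : ℕ) (hl : 2 ≤ l) :
    ∑ ν : Nat.Partition l,
        ((-1 : ℝ) ^ (Multiset.card ν.parts) / (zPartition ν : ℝ)) *
          (ν.parts.map (fun d =>
            (c : ℝ) * (d : ℝ) * (1 - q ^ (c - 1)) * (1 - q ^ (d - 1)) / (1 - q ^ (c + d - 1)))).sum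
      = (c : ℝ) *
          ((1 - q ^ (c - 1)) * (1 - q ^ (l - 2)) / (1 - q ^ (c + l - 2))
            - (1 - q ^ (c - 1)) * (1 - q ^ (l - 1)) / (1 - q ^ (c + l - 1))) := by
  have hzp : ∀ ν : Nat.Partition l, (zPartition ν : ℝ) = (zM ν.parts : ℝ) := fun _ => rfl
  set h : ℕ → ℝ := fun d : ℕ =>
    (c : ℝ) * (d : ℝ) * (1 - q ^ (c - 1)) * (1 - q ^ ((d : ℝ) - 1))
      / (1 - q ^ ((c : ℝ) + (d : ℝ) - 1)) with hh
  have key : ∀ (s : Multiset ℕ),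
      (s.map (fun d =>
        (c : ℝ) * (d : ℝ) * (1 - q ^ (c - 1)) * (1 - q ^ (d - 1)) / (1 - q ^ (c + d - 1)))).sum
      = (Multiset.map h s).sum := by
    intro s
    congr 1
    rw [hh]
    simp [Multiset.map_map]
  have main : ∑ ν : Nat.Partition l,
      (-1 : ℝ) ^ (Multiset.card ν.parts) / (zM ν.parts : ℝ) * (Multiset.map h ν.parts).sum
      = ∑ d ∈ Finset.Icc 1 l, h d * (- B (l - d) / d) := master l h
  rw [Finset.sum_congr rfl (fun ν _ => by rw [hzp ν, key ν.parts]), main]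
  have hsub : ({l - 1, l} : Finset ℕ) ⊆ Finset.Icc 1 l := by
    intro x hx
    simp only [Finset.mem_insert, Finset.mem_singleton] at hx
    rcases hx with rfl | rfl <;> exact Finset.mem_Icc.2 (by omega)
  rw [← Finset.sum_subset hsub (fun x hx hnx => by
    simp only [Finset.mem_insert, Finset.mem_singleton] at hnx
    push_neg at hnx
    obtain ⟨hx1, hx2⟩ := Finset.mem_Icc.1 hx
    rw [B_eq_zero (l - x) (by omega)]
    simp)]
  rw [Finset.sum_insert (by simp; omega), Finset.sum_singleton]
  rw [show l - (l - 1) = 1 by omega, Nat.sub_self, B_one, B_zero, hh]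
  simp only
  have E1 : ((l - 1 : ℕ) : ℝ) - 1 = ((l - 2 : ℕ) : ℝ) := by
    rw [Nat.cast_sub (by omega), Nat.cast_sub (by omega)]
    push_cast
    ring
  have E2 : (c : ℝ) + ((l - 1 : ℕ) : ℝ) - 1 = ((c + l - 2 : ℕ) : ℝ) := by
    rw [Nat.cast_sub (by omega), Nat.cast_sub (by omega)]
    push_cast
    ring
  have E3 : ((l : ℕ) : ℝ) - 1 = ((l - 1 : ℕ) : ℝ) := by
    rw [Nat.cast_sub (by omega)]
    push_cast
    ring
  have E4 : (c : ℝ) + ((l : ℕ) : ℝ) - 1 = ((c + l - 1 : ℕ) : ℝ) := by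
    rw [Nat.cast_sub (by omega)]
    push_cast
    ring
  rw [E1, E2, E3, E4, Real.rpow_natCast, Real.rpow_natCast, Real.rpow_natCast,
    Real.rpow_natCast]
  have hA : (1 - q ^ (c + l - 2)) ≠ 0 := one_sub_pow_ne q hq0 hq1 _ (by omega)
  have hB : (1 - q ^ (c + l - 1)) ≠ 0 := one_sub_pow_ne q hq0 hq1 _ (by omega)
  have hl1 : ((l - 1 : ℕ) : ℝ) ≠ 0 := Nat.cast_ne_zero.2 (by omega)
  have hl0 : ((l : ℕ) : ℝ) ≠ 0 := Nat.cast_ne_zero.2 (by omega)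
  have hl1' : ((l : ℕ) : ℝ) - 1 ≠ 0 := by
    have : (1 : ℝ) < (l : ℝ) := by exact_mod_cast (by omega : 1 < l)
    intro h'
    linarith
  rw [show ((l - 1 : ℕ) : ℝ) = (l : ℝ) - 1 by rw [Nat.cast_sub (by omega)]; push_cast; ring]
  field_simp
  ring
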